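/- Let a, b, r, C₂ ∈ ℂ with a ≠ 0. Set Ī(t) = C₂·e^{-a·t} and X̄(t) = exp((r·C₂/a)·e^{-a·t}). Define δS(t) = 0, δE(t) = 0, δI(t) = e^{-a·t}, δX(t) = (r/a)·(e^{-a·t} − 1)·X̄(t), δY(t) = 0, δZ(t) = 0. Then (δS, δE, δI, δX, δY, δZ) is a solution of the variational equation δS' = -r·Ī(t)·δS, δE' = r·Ī(t)·δS - b·δE, δI' = b·δE - a·δI, δX' = -r·X̄(t)·δI - r·Ī(t)·δX, δY' = -(r·b/a)·δE, δZ' = -(r²/a)·Ī(t)·δS on ℝ, with initial value (0, 0, 1, 0, 0, 0) at t = 0. -/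

import Mathlib

/-- `Ī(t) = C₂·e^{-a t}`. -/
noncomputable def Ibar (a C₂ : ℂ) (t : ℝ) : ℂ := C₂ * Complex.exp (-a * t)

/-- `X̄(t) = exp((r C₂ / a)·e^{-a t})`. -/
noncomputable def Xbar (a r C₂ : ℂ) (t : ℝ) : ℂ :=
  Complex.exp (r * C₂ / a * Complex.exp (-a * t))

/-- `δI(t) = e^{-a t}`. -/
noncomputable def dI (a : ℂ) (t : ℝ) : ℂ := Complex.exp (-a * t)

/-- `δX(t) = (r/a)(e^{-a t} − 1) X̄(t)`. -/
noncomputable def dX (a r C₂ : ℂ) (t : ℝ) : ℂ :=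
  r / a * (Complex.exp (-a * t) - 1) * Xbar a r C₂ t

lemma exp_deriv (a : ℂ) (t : ℝ) :
    HasDerivAt (fun s : ℝ => Complex.exp (-a * s)) (-a * Complex.exp (-a * t)) t := by
  have h1 : HasDerivAt (fun s : ℝ => -a * (s : ℂ)) (-a) t := by
    simpa using (Complex.ofRealCLM.hasDerivAt (x := t)).const_mul (-a)
  have h := h1.cexp
  convert h using 1
  ring

/-- The third solution of the variational equation of the extended SEIR system,
with initial value `(0,0,1,0,0,0)`. -/
theorem variational_solution_three (a b r C₂ : ℂ) (ha : a ≠ 0) :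
    (∀ t : ℝ,
      HasDerivAt (fun _ : ℝ => (0 : ℂ)) (-r * Ibar a C₂ t * 0) t ∧
      HasDerivAt (fun _ : ℝ => (0 : ℂ)) (r * Ibar a C₂ t * 0 - b * 0) t ∧
      HasDerivAt (dI a) (b * 0 - a * dI a t) t ∧
      HasDerivAt (dX a r C₂)
        (-r * Xbar a r C₂ t * dI a t - r * Ibar a C₂ t * dX a r C₂ t) t ∧
      HasDerivAt (fun _ : ℝ => (0 : ℂ)) (-(r * b / a) * 0) t ∧
      HasDerivAt (fun _ : ℝ => (0 : ℂ)) (-(r ^ 2 / a) * Ibar a C₂ t * 0) t) ∧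
    (0 : ℂ) = 0 ∧ (0 : ℂ) = 0 ∧ dI a 0 = 1 ∧ dX a r C₂ 0 = 0 ∧ (0 : ℂ) = 0 ∧
    (0 : ℂ) = 0 := by
  refine ⟨fun t => ?_, rfl, rfl, by simp [dI], by simp [dX], rfl, rfl⟩
  have hE := exp_deriv a t
  have hX : HasDerivAt (Xbar a r C₂)
      (r * C₂ / a * (-a * Complex.exp (-a * t)) * Xbar a r C₂ t) t := by
    have h := (hE.const_mul (r * C₂ / a)).cexp
    convert h using 1
    · rfl
    · simp only [Xbar]; ring
  refine ⟨by simpa using hasDerivAt_const t (0:ℂ),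
    by simpa using hasDerivAt_const t (0:ℂ), ?_, ?_,
    by simpa using hasDerivAt_const t (0:ℂ),
    by simpa using hasDerivAt_const t (0:ℂ)⟩
  · unfold dI; simpa using hE
  · have h1 : HasDerivAt (fun s : ℝ => r / a * (Complex.exp (-a * s) - 1))
        (r / a * (-a * Complex.exp (-a * t))) t :=
      ((hE.sub_const 1).const_mul _)
    have h2 := h1.mul hX
    have key : r / a * (-a * Complex.exp (-a * t)) * Xbar a r C₂ t +
        r / a * (Complex.exp (-a * t) - 1) *
          (r * C₂ / a * (-a * Complex.exp (-a * t)) * Xbar a r C₂ t) =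
        -r * Xbar a r C₂ t * dI a t - r * Ibar a C₂ t * dX a r C₂ t := by
      simp only [dI, dX, Ibar]
      field_simp
      ring
    rw [show dX a r C₂ = fun s : ℝ => r / a * (Complex.exp (-a * s) - 1) * Xbar a r C₂ s from rfl]
    exact key ▸ h2
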